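/- The topological space X := (ℕ⁺, τ) does not satisfy the T₀ separation axiom: there exist two distinct points of ℕ⁺ that are not topologically distinguishable in τ. -/

import Mathlib

/-- `σ n` is the set of positive integers coprime to `n`. -/
def sigmaSet (n : ℕ+) : Set ℕ+ := {m : ℕ+ | Nat.gcd (n : ℕ) (m : ℕ) = 1}

/-- The base `β = {σ n : n ∈ ℕ⁺}`. -/
def betaBase : Set (Set ℕ+) := {s : Set ℕ+ | ∃ n : ℕ+, s = sigmaSet n}

/-- The topology `τ` on `ℕ⁺` generated by `β`. -/
def tau : TopologicalSpace ℕ+ := TopologicalSpace.generateFrom betaBase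

theorem tau_not_T0 :
    ∃ x y : ℕ+, x ≠ y ∧ @Inseparable ℕ+ tau x y := by
  refine ⟨2, 4, by decide, ?_⟩
  rw [@inseparable_iff_forall_isOpen ℕ+ tau]
  intro s hs
  induction hs with
  | basic u hu =>
      obtain ⟨n, rfl⟩ := hu
      simp only [sigmaSet, Set.mem_setOf_eq]
      have h2 : ((2 : ℕ+) : ℕ) = 2 := rfl
      have h4 : ((4 : ℕ+) : ℕ) = 2 ^ 2 := rfl
      rw [h2, h4]
      constructor
      · intro h; exact Nat.Coprime.pow_right 2 h
      · intro h; exact (Nat.coprime_pow_right_iff (n := 2) (by norm_num) _ _).mp h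
  | univ => simp
  | inter u v _ _ ihu ihv => simp [ihu, ihv]
  | sUnion S _ ih =>
      simp only [Set.mem_sUnion]
      exact ⟨fun ⟨t, ht, h⟩ => ⟨t, ht, (ih t ht).mp h⟩,
             fun ⟨t, ht, h⟩ => ⟨t, ht, (ih t ht).mpr h⟩⟩
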